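/- Assume lim_{ξ → +∞} (Σ_{k=1}^{T} ∫_0^ξ f(k, t) dt) / ξ^2 = 0, and that γ_k := liminf_{ξ → 0^+} (∫_0^ξ f(k, t) dt) / ξ^2 > 0 for every k ∈ {1, ..., T}. Then for every real α > (2 / min_{k ∈ {1,...,T}} γ_k) · sin^2(π / (2(T+1))), there exists a function u : {0, 1, ..., T+1} → ℝ with u(0) = u(T+1) = 0 and u(k) > 0 for all k ∈ {1, ..., T}, such that -(u(k+1) - 2u(k) + u(k-1)) = α f(k, u(k)) for all k ∈ {1, ..., T}. -/

import Mathlib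

open Real Filter

lemma sbp_aux (u : ℕ → ℝ) : ∀ m, ∑ k ∈ Finset.range m, (u (k+1) - u k)^2
    = (∑ k ∈ Finset.range m, u (k+1) * (2*u (k+1) - u (k+2) - u k))
      + u 0^2 - u m^2 + u (m+1) * u m - u 1 * u 0 := by
  intro m
  induction m with
  | zero => simp
  | succ m ih => rw [Finset.sum_range_succ, Finset.sum_range_succ, ih]; ring

lemma sbp (n : ℕ) (u : ℕ → ℝ) (h0 : u 0 = 0) (hn : u (n+1) = 0) :
    ∑ k ∈ Finset.range (n+1), (u (k+1) - u k)^2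
      = ∑ k ∈ Finset.Icc 1 n, u k * (2 * u k - u (k+1) - u (k-1)) := by
  rw [sbp_aux u (n+1), h0, hn, Finset.sum_range_succ, hn]
  rw [← Finset.Ico_add_one_right_eq_Icc, Finset.sum_Ico_eq_sum_range]
  have hrs : n + 1 - 1 = n := rfl
  rw [hrs]
  have : ∀ i ∈ Finset.range n, u (1+i) * (2 * u (1+i) - u (1+i+1) - u (1+i-1))
      = u (i+1) * (2*u (i+1) - u (i+2) - u i) := by
    intro i _
    rw [show 1 + i = i + 1 by omega]
    rw [show i + 1 + 1 = i + 2 by omega, show i + 1 - 1 = i by omega]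
  rw [Finset.sum_congr rfl this]
  ring

lemma sup_le_energy (n : ℕ) (u : ℕ → ℝ) (h0 : u 0 = 0) (m : ℕ) (hm : m ≤ n+1) :
    (u m)^2 ≤ (n+1) * ∑ k ∈ Finset.range (n+1), (u (k+1) - u k)^2 := by
  have h1 : u m = ∑ k ∈ Finset.range m, (u (k+1) - u k) := by
    rw [Finset.sum_range_sub u m, h0, sub_zero]
  have h2 : |u m| ≤ ∑ k ∈ Finset.range (n+1), |u (k+1) - u k| := by
    calc |u m| ≤ ∑ k ∈ Finset.range m, |u (k+1) - u k| := by
          rw [h1]; exact Finset.abs_sum_le_sum_abs _ _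
      _ ≤ ∑ k ∈ Finset.range (n+1), |u (k+1) - u k| := by
          apply Finset.sum_le_sum_of_subset_of_nonneg
          · exact Finset.range_subset_range.2 hm
          · intro i _ _; exact abs_nonneg _
  have h3 : (u m)^2 = |u m|^2 := (sq_abs _).symm
  rw [h3]
  calc |u m|^2 ≤ (∑ k ∈ Finset.range (n+1), |u (k+1) - u k|)^2 := by
        apply pow_le_pow_left₀ (abs_nonneg _) h2
    _ ≤ (Finset.range (n+1)).card * ∑ k ∈ Finset.range (n+1), |u (k+1) - u k|^2 := by
        exact_mod_cast sq_sum_le_card_mul_sum_sq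
          (s := Finset.range (n+1)) (f := fun k => |u (k+1) - u k|)
    _ = (n+1) * ∑ k ∈ Finset.range (n+1), (u (k+1) - u k)^2 := by
        simp [sq_abs]

lemma concave_nonneg (n : ℕ) (u : ℕ → ℝ) (h0 : u 0 = 0) (hn : u (n+1) = 0)
    (hc : ∀ k ∈ Finset.Icc 1 n, u (k+1) + u (k-1) ≤ 2 * u k) :
    ∀ k, k ≤ n+1 → 0 ≤ u k := by
  set D : ℕ → ℝ := fun i => u (i+1) - u i with hD
  have hstep : ∀ i, i + 1 ≤ n → D (i+1) ≤ D i := by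
    intro i hi
    have := hc (i+1) (by simp; omega)
    simp only [hD] at *
    have e : i + 1 - 1 = i := by omega
    rw [e] at this
    linarith
  have hmono : ∀ j, j ≤ n → ∀ i, i ≤ j → D j ≤ D i := by
    intro j
    induction j with
    | zero => intro _ i hi; interval_cases i; exact le_refl _
    | succ j ih =>
      intro hj i hi
      rcases Nat.eq_or_lt_of_le hi with h | h
      · rw [h]
      · exact le_trans (hstep j (by omega)) (ih (by omega) i (by omega))
  have husum : ∀ k, u k = ∑ i ∈ Finset.range k, D i := by
    intro k; rw [Finset.sum_range_sub u k, h0, sub_zero]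
  intro k hk
  by_contra hneg
  push_neg at hneg
  have hk1 : 1 ≤ k := by
    rcases Nat.eq_zero_or_pos k with h | h
    · rw [h, h0] at hneg; linarith
    · exact h
  have hkn : k ≤ n := by
    rcases Nat.lt_or_ge k (n+1) with h | h
    · omega
    · have : k = n+1 := by omega
      rw [this, hn] at hneg; linarith
  have hDk : D (k-1) < 0 := by
    by_contra hD0
    push_neg at hD0
    have : ∀ i ∈ Finset.range k, (0:ℝ) ≤ D i := by
      intro i hi
      simp at hi
      exact le_trans hD0 (hmono (k-1) (by omega) i (by omega))
    have := Finset.sum_nonneg this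
    rw [← husum] at this; linarith
  have hsum2 : u (n+1) = u k + ∑ i ∈ Finset.Ico k (n+1), D i := by
    rw [husum (n+1), husum k, Finset.sum_Ico_eq_sub _ (by omega)]
    ring
  have : ∑ i ∈ Finset.Ico k (n+1), D i ≤ 0 := by
    apply Finset.sum_nonpos
    intro i hi
    simp at hi
    exact le_of_lt (lt_of_le_of_lt (hmono i (by omega) (k-1) (by omega)) hDk)
  rw [hn] at hsum2
  linarith

lemma zero_propagates (n : ℕ) (u : ℕ → ℝ) (h0 : u 0 = 0)
    (hnn : ∀ k, k ≤ n+1 → 0 ≤ u k)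
    (hc : ∀ k ∈ Finset.Icc 1 n, u (k+1) + u (k-1) ≤ 2 * u k)
    (k0 : ℕ) (hk0 : k0 ∈ Finset.Icc 1 n) (hz : u k0 = 0) :
    ∀ k ∈ Finset.Icc 1 n, u k = 0 := by
  simp only [Finset.mem_Icc] at hk0
  have step : ∀ k, 1 ≤ k → k ≤ n → u k = 0 → u (k+1) = 0 ∧ u (k-1) = 0 := by
    intro k h1 h2 hzk
    have hck := hc k (by simp; omega)
    rw [hzk] at hck
    have h3 : 0 ≤ u (k+1) := hnn (k+1) (by omega)
    have h4 : 0 ≤ u (k-1) := hnn (k-1) (by omega)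
    constructor <;> linarith
  have up : ∀ j, k0 + j ≤ n → u (k0 + j) = 0 := by
    intro j
    induction j with
    | zero => intro _; exact hz
    | succ j ih =>
      intro hj
      exact (step (k0+j) (by omega) (by omega) (ih (by omega))).1
  have down : ∀ j, j ≤ k0 - 1 → u (k0 - j) = 0 := by
    intro j
    induction j with
    | zero => intro _; exact hz
    | succ j ih =>
      intro hj
      have h := (step (k0-j) (by omega) (by omega) (ih (by omega))).2
      have : k0 - j - 1 = k0 - (j+1) := by omega
      rwa [this] at h
  intro k hk
  simp only [Finset.mem_Icc] at hk
  rcases Nat.lt_or_ge k k0 with h | h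
  · have := down (k0 - k) (by omega)
    have e : k0 - (k0 - k) = k := by omega
    rwa [e] at this
  · have := up (k - k0) (by omega)
    have e : k0 + (k - k0) = k := by omega
    rwa [e] at this


noncomputable section

def Uext (T : ℕ) (v : Fin T → ℝ) (k : ℕ) : ℝ :=
  if h : 1 ≤ k ∧ k ≤ T then v ⟨k - 1, by omega⟩ else 0

def Fint (f : ℕ → ℝ → ℝ) (k : ℕ) (x : ℝ) : ℝ := ∫ t in (0:ℝ)..x, f k (max t 0)

def Phi (T : ℕ) (f : ℕ → ℝ → ℝ) (α : ℝ) (v : Fin T → ℝ) : ℝ :=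
  (∑ k ∈ Finset.range (T+1), (Uext T v (k+1) - Uext T v k)^2) / 2
    - α * ∑ k ∈ Finset.Icc 1 T, Fint f k (Uext T v k)

section basic

variable {T : ℕ} {f : ℕ → ℝ → ℝ}

lemma Uext_zero (v : Fin T → ℝ) : Uext T v 0 = 0 := by simp [Uext]

lemma Uext_top (v : Fin T → ℝ) : Uext T v (T+1) = 0 := by
  simp only [Uext]; rw [dif_neg]; omega

lemma Uext_mem (v : Fin T → ℝ) {k : ℕ} (h1 : 1 ≤ k) (h2 : k ≤ T) :
    Uext T v k = v ⟨k - 1, by omega⟩ := by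
  simp only [Uext]; rw [dif_pos ⟨h1, h2⟩]

lemma Uext_abs_le (v : Fin T → ℝ) (k : ℕ) : |Uext T v k| ≤ ‖v‖ := by
  by_cases h : 1 ≤ k ∧ k ≤ T
  · rw [Uext_mem v h.1 h.2]
    exact norm_le_pi_norm v _
  · simp only [Uext, dif_neg h]
    simp [norm_nonneg]

lemma Uext_update (v : Fin T → ℝ) (j : Fin T) (t : ℝ) (k : ℕ) :
    Uext T (Function.update v j t) k = if k = (j:ℕ)+1 then t else Uext T v k := by
  by_cases h : 1 ≤ k ∧ k ≤ T
  · simp only [Uext, dif_pos h]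
    by_cases hk : k = (j:ℕ)+1
    · have : (⟨k-1, by omega⟩ : Fin T) = j := by
        ext; simp; omega
      rw [if_pos hk, this, Function.update_self]
    · have : (⟨k-1, by omega⟩ : Fin T) ≠ j := by
        intro hc
        apply hk
        have := congrArg Fin.val hc
        simp at this; omega
      rw [if_neg hk, Function.update_of_ne this]
  · have hk : k ≠ (j:ℕ)+1 := by
      intro hc
      exact h ⟨by omega, by rw [hc]; exact j.isLt⟩
    simp only [Uext, dif_neg h, if_neg hk]

lemma Uext_continuous (k : ℕ) : Continuous (fun v : Fin T → ℝ => Uext T v k) := by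
  by_cases h : 1 ≤ k ∧ k ≤ T
  · simp only [Uext, dif_pos h]
    exact continuous_apply _
  · simp only [Uext, dif_neg h]
    exact continuous_const

end basic

section gF

variable {T : ℕ} {f : ℕ → ℝ → ℝ} {k : ℕ}

lemma g_cont (hf_cont : ContinuousOn (f k) (Set.Ici 0)) :
    Continuous (fun t : ℝ => f k (max t 0)) := by
  apply hf_cont.comp_continuous (continuous_id.max continuous_const)
  intro x; simp [Set.mem_Ici, le_max_right]

lemma g_nonneg (hf_nonneg : ∀ ξ : ℝ, 0 ≤ ξ → 0 ≤ f k ξ) (t : ℝ) :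
    0 ≤ f k (max t 0) := hf_nonneg _ (le_max_right _ _)

lemma Fint_zero : Fint f k 0 = 0 := by simp [Fint]

lemma Fint_hasDerivAt (hf_cont : ContinuousOn (f k) (Set.Ici 0)) (x : ℝ) :
    HasDerivAt (Fint f k) (f k (max x 0)) x := by
  have hg := g_cont hf_cont
  exact intervalIntegral.integral_hasDerivAt_right
    (hg.intervalIntegrable _ _)
    (hg.stronglyMeasurable.stronglyMeasurableAtFilter)
    hg.continuousAt

lemma Fint_continuous (hf_cont : ContinuousOn (f k) (Set.Ici 0)) :
    Continuous (Fint f k) := by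
  have : ∀ x, HasDerivAt (Fint f k) (f k (max x 0)) x := Fint_hasDerivAt hf_cont
  exact continuous_iff_continuousAt.2 fun x => (this x).continuousAt

lemma Fint_mono (hf_cont : ContinuousOn (f k) (Set.Ici 0))
    (hf_nonneg : ∀ ξ : ℝ, 0 ≤ ξ → 0 ≤ f k ξ) {a b : ℝ} (hab : a ≤ b) :
    Fint f k a ≤ Fint f k b := by
  have hg := g_cont hf_cont
  have : Fint f k b - Fint f k a = ∫ t in a..b, f k (max t 0) := by
    rw [Fint, Fint, ← intervalIntegral.integral_add_adjacent_intervals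
      (hg.intervalIntegrable 0 a) (hg.intervalIntegrable a b)]
    ring
  have hpos : 0 ≤ ∫ t in a..b, f k (max t 0) :=
    intervalIntegral.integral_nonneg hab (fun t _ => g_nonneg hf_nonneg t)
  linarith

lemma Fint_eq_integral (hf_nonneg : ∀ ξ : ℝ, 0 ≤ ξ → 0 ≤ f k ξ) {x : ℝ} (hx : 0 ≤ x) :
    Fint f k x = ∫ t in (0:ℝ)..x, f k t := by
  apply intervalIntegral.integral_congr
  intro t ht
  rw [Set.uIcc_of_le hx] at ht
  show f k (max t 0) = f k t
  rw [max_eq_left ht.1]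

end gF

end
section PhiLemmas

variable {T : ℕ} {f : ℕ → ℝ → ℝ} {α : ℝ}

lemma Phi_continuous (hf_cont : ∀ k ∈ Finset.Icc 1 T, ContinuousOn (f k) (Set.Ici 0)) :
    Continuous (Phi T f α) := by
  apply Continuous.sub
  · apply Continuous.div_const
    apply continuous_finset_sum
    intro k _
    exact ((Uext_continuous (k+1)).sub (Uext_continuous k)).pow 2
  · exact continuous_const.mul (continuous_finset_sum _ fun k hk =>
      (Fint_continuous (hf_cont k hk)).comp (Uext_continuous k))

lemma Phi_zero : Phi T f α 0 = 0 := by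
  have h : ∀ k, Uext T (0 : Fin T → ℝ) k = 0 := by
    intro k
    by_cases h : 1 ≤ k ∧ k ≤ T
    · rw [Uext_mem _ h.1 h.2]; rfl
    · simp [Uext, dif_neg h]
  simp [Phi, h, Fint_zero]

lemma norm_sq_le_energy (v : Fin T → ℝ) :
    ‖v‖^2 ≤ (T+1) * ∑ k ∈ Finset.range (T+1), (Uext T v (k+1) - Uext T v k)^2 := by
  set Q := ∑ k ∈ Finset.range (T+1), (Uext T v (k+1) - Uext T v k)^2 with hQ
  have hQ0 : 0 ≤ Q := Finset.sum_nonneg fun k _ => sq_nonneg _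
  have hC0 : 0 ≤ Real.sqrt ((T+1) * Q) := Real.sqrt_nonneg _
  have hnorm : ‖v‖ ≤ Real.sqrt ((T+1) * Q) := by
    apply pi_norm_le_iff_of_nonneg hC0 |>.2
    intro j
    have h1 : Uext T v ((j:ℕ)+1) = v j := by
      rw [Uext_mem v (by omega) (by omega : (j:ℕ)+1 ≤ T)]
      congr 1
    have h2 := sup_le_energy T (Uext T v) (Uext_zero v) ((j:ℕ)+1) (by omega)
    rw [h1] at h2
    have : |v j| ≤ Real.sqrt ((T+1) * Q) := by
      rw [← Real.sqrt_sq (abs_nonneg (v j))]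
      apply Real.sqrt_le_sqrt
      rw [sq_abs]
      exact_mod_cast h2
    simpa [Real.norm_eq_abs] using this
  calc ‖v‖^2 ≤ (Real.sqrt ((T+1) * Q))^2 := by
        apply pow_le_pow_left₀ (norm_nonneg v) hnorm
    _ = (T+1) * Q := Real.sq_sqrt (by positivity)

lemma Phi_coercive (hf_cont : ∀ k ∈ Finset.Icc 1 T, ContinuousOn (f k) (Set.Ici 0))
    (hf_nonneg : ∀ k ∈ Finset.Icc 1 T, ∀ ξ : ℝ, 0 ≤ ξ → 0 ≤ f k ξ)
    (hα : 0 < α)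
    (hlim : Filter.Tendsto
      (fun ξ : ℝ => (∑ k ∈ Finset.Icc 1 T, ∫ t in (0:ℝ)..ξ, f k t) / ξ ^ 2)
      Filter.atTop (nhds 0)) :
    Filter.Tendsto (Phi T f α) (Filter.cocompact (Fin T → ℝ)) Filter.atTop := by
  set ε : ℝ := 1 / (4 * ((T:ℝ)+1) * α) with hε_def
  have hTpos : (0:ℝ) < (T:ℝ) + 1 := by positivity
  have hε : 0 < ε := by positivity
  obtain ⟨M, hM⟩ : ∃ M : ℝ, ∀ ξ ≥ M,
      |∑ k ∈ Finset.Icc 1 T, ∫ t in (0:ℝ)..ξ, f k t| / ξ ^ 2 < ε := by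
    obtain ⟨M, hM⟩ := Filter.eventually_atTop.1 (hlim.eventually (Metric.ball_mem_nhds (0:ℝ) hε))
    exact ⟨M, fun ξ hξ => by simpa [Real.dist_eq, abs_div] using hM ξ hξ⟩
  -- main pointwise bound
  have key : ∀ v : Fin T → ℝ, max M 1 ≤ ‖v‖ →
      ‖v‖^2 / (4*((T:ℝ)+1)) ≤ Phi T f α v := by
    intro v hv
    set r := ‖v‖ with hr
    have hr1 : (1:ℝ) ≤ r := le_trans (le_max_right _ _) hv
    have hr0 : (0:ℝ) < r := by linarith
    set Q := ∑ k ∈ Finset.range (T+1), (Uext T v (k+1) - Uext T v k)^2 with hQdef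
    have hQ : r^2 ≤ ((T:ℝ)+1) * Q := by
      have := norm_sq_le_energy v
      exact_mod_cast this
    have hP : ∑ k ∈ Finset.Icc 1 T, Fint f k (Uext T v k) ≤ ε * r^2 := by
      have hPk : ∀ k ∈ Finset.Icc 1 T, Fint f k (Uext T v k) ≤ Fint f k r := by
        intro k hk
        apply Fint_mono (hf_cont k hk) (hf_nonneg k hk)
        exact le_trans (le_abs_self _) (Uext_abs_le v k)
      calc ∑ k ∈ Finset.Icc 1 T, Fint f k (Uext T v k)
          ≤ ∑ k ∈ Finset.Icc 1 T, Fint f k r := Finset.sum_le_sum hPk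
        _ = ∑ k ∈ Finset.Icc 1 T, ∫ t in (0:ℝ)..r, f k t := by
            apply Finset.sum_congr rfl
            intro k hk
            exact Fint_eq_integral (hf_nonneg k hk) (le_of_lt hr0)
        _ ≤ ε * r^2 := by
            have h1 := hM r (le_trans (le_max_left _ _) hv)
            rw [div_lt_iff₀ (by positivity : (0:ℝ) < r^2)] at h1
            have h2 := le_trans (le_abs_self _) (le_of_lt h1)
            linarith
    have : Phi T f α v = Q/2 - α * ∑ k ∈ Finset.Icc 1 T, Fint f k (Uext T v k) := rfl
    rw [this]
    have hαP : α * ∑ k ∈ Finset.Icc 1 T, Fint f k (Uext T v k) ≤ α * (ε * r^2) :=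
      mul_le_mul_of_nonneg_left hP (le_of_lt hα)
    have hαε : α * ε = 1 / (4*((T:ℝ)+1)) := by
      rw [hε_def]; field_simp
    have hQ2 : r^2 / (2*((T:ℝ)+1)) ≤ Q / 2 := by
      rw [div_le_div_iff₀ (by positivity) (by norm_num)]
      nlinarith
    calc r^2 / (4*((T:ℝ)+1)) = r^2/(2*((T:ℝ)+1)) - r^2 * (1/(4*((T:ℝ)+1))) := by
          field_simp; ring
      _ ≤ Q/2 - α * (ε * r^2) := by
          rw [← mul_assoc, hαε]
          apply sub_le_sub hQ2
          apply le_of_eq; ring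
      _ ≤ Q/2 - α * ∑ k ∈ Finset.Icc 1 T, Fint f k (Uext T v k) := by linarith
  -- conclude
  rw [Filter.tendsto_atTop]
  intro C
  have hR : ∀ᶠ v in Filter.cocompact (Fin T → ℝ),
      max (max M 1) (Real.sqrt (4*((T:ℝ)+1)*|C|)) ≤ ‖v‖ :=
    tendsto_norm_cocompact_atTop.eventually (Filter.eventually_ge_atTop _)
  filter_upwards [hR] with v hv
  have h1 : max M 1 ≤ ‖v‖ := le_trans (le_max_left _ _) hv
  have h2 := key v h1
  have h3 : Real.sqrt (4*((T:ℝ)+1)*|C|) ≤ ‖v‖ := le_trans (le_max_right _ _) hv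
  have h4 : 4*((T:ℝ)+1)*|C| ≤ ‖v‖^2 := by
    rw [← Real.sq_sqrt (by positivity : (0:ℝ) ≤ 4*((T:ℝ)+1)*|C|)]
    apply pow_le_pow_left₀ (Real.sqrt_nonneg _) h3
  have h5 : |C| ≤ ‖v‖^2 / (4*((T:ℝ)+1)) := by
    rw [le_div_iff₀ (by positivity)]
    linarith
  exact le_trans (le_trans (le_abs_self C) h5) h2

end PhiLemmas
section EL

variable {T : ℕ} {f : ℕ → ℝ → ℝ} {α : ℝ}

lemma Phi_EL (hf_cont : ∀ k ∈ Finset.Icc 1 T, ContinuousOn (f k) (Set.Ici 0))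
    (v : Fin T → ℝ) (hmin : ∀ w, Phi T f α v ≤ Phi T f α w) (j : Fin T) :
    2 * Uext T v ((j:ℕ)+1) - Uext T v ((j:ℕ)+1+1) - Uext T v ((j:ℕ)+1-1)
      = α * f ((j:ℕ)+1) (max (Uext T v ((j:ℕ)+1)) 0) := by
  set m := (j:ℕ)+1 with hm
  set u := Uext T v with hu
  set t₀ := v j with ht₀
  have hjT : (j:ℕ) < T := j.isLt
  have hum : u m = t₀ := by
    rw [hu, Uext_mem v (by omega) (by omega : m ≤ T), ht₀]
    congr 1
  have hmem1 : m ∈ Finset.Icc 1 T := by simp [hm]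
  -- the one-variable function
  set H : ℝ → ℝ := fun t => Phi T f α (Function.update v j t) with hH
  have hlocmin : IsLocalMin H t₀ := by
    apply Filter.Eventually.of_forall
    intro t
    have : H t₀ = Phi T f α v := by
      rw [hH]; simp only [ht₀, Function.update_eq_self]
    rw [this]
    exact hmin _
  -- derivative of H
  set Dval : ℝ := (2*(t₀ - u (m-1)) + 2*(t₀ - u (m+1)))/2 - α * f m (max t₀ 0) with hDval
  have hd : HasDerivAt H Dval t₀ := by
    rw [hH]
    simp only [Phi, Uext_update, ← hu, ← hm]
    have hq : HasDerivAt
        (fun t => ∑ k ∈ Finset.range (T+1),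
          ((if k+1 = m then t else u (k+1)) - (if k = m then t else u k))^2)
        (∑ k ∈ Finset.range (T+1),
          ((if k = m-1 then 2*(t₀ - u (m-1)) else 0) + (if k = m then 2*(t₀ - u (m+1)) else 0)))
        t₀ := by
      apply HasDerivAt.fun_sum
      intro k hk
      by_cases h1 : k = m - 1
      · have e1 : k + 1 = m := by omega
        have e2 : k ≠ m := by omega
        simp only [if_pos h1, if_pos e1, if_neg e2, add_zero]
        have : k = m - 1 := h1
        rw [this]
        have := ((hasDerivAt_id t₀).sub_const (u (m-1))).pow 2
        refine this.congr_deriv (Eq.symm ?_)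
        norm_num
      · by_cases h2 : k = m
        · have e1 : ¬ (k + 1 = m) := by omega
          simp only [if_neg h1, if_pos h2, if_neg e1, zero_add]
          rw [h2]
          have := ((hasDerivAt_id t₀).const_sub (u (m+1))).pow 2
          have h3 : HasDerivAt (fun t => (u (m+1) - t)^2) (2*(t₀ - u (m+1))) t₀ := by
            refine this.congr_deriv (Eq.symm ?_)
            norm_num; ring
          exact h3
        · have e1 : ¬ (k + 1 = m) := by omega
          simp only [if_neg h1, if_neg h2, if_neg e1, add_zero]
          exact hasDerivAt_const _ _
    have hF : HasDerivAt
        (fun t => ∑ k ∈ Finset.Icc 1 T, Fint f k (if k = m then t else u k))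
        (∑ k ∈ Finset.Icc 1 T, if k = m then f m (max t₀ 0) else 0) t₀ := by
      apply HasDerivAt.fun_sum
      intro k hk
      by_cases h2 : k = m
      · simp only [if_pos h2]
        rw [h2]
        exact Fint_hasDerivAt (hf_cont m hmem1) t₀
      · simp only [if_neg h2]
        exact hasDerivAt_const _ _
    have := (hq.div_const 2).sub ((hF.const_mul α))
    refine this.congr_deriv (Eq.symm ?_)
    rw [hDval]
    congr 1
    · congr 1
      rw [Finset.sum_add_distrib]
      rw [Finset.sum_ite_eq' (Finset.range (T+1)) (m-1) (fun _ => 2*(t₀ - u (m-1)))]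
      rw [Finset.sum_ite_eq' (Finset.range (T+1)) m (fun _ => 2*(t₀ - u (m+1)))]
      rw [if_pos (by simp only [Finset.mem_range]; omega : m - 1 ∈ Finset.range (T+1)),
        if_pos (by simp only [Finset.mem_range]; omega : m ∈ Finset.range (T+1))]
    · congr 1
      rw [Finset.sum_ite_eq' (Finset.Icc 1 T) m (fun _ => f m (max t₀ 0))]
      rw [if_pos hmem1]
  have hzero : Dval = 0 := hlocmin.hasDerivAt_eq_zero hd
  rw [hDval, ← hum] at hzero
  linarith [hzero]

end EL
section Main

lemma eigen_identity (T : ℕ) {k : ℕ} (hk1 : 1 ≤ k) :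
    2 * Real.sin ((k:ℝ) * (π/((T:ℝ)+1))) - Real.sin (((k+1 : ℕ):ℝ) * (π/((T:ℝ)+1)))
      - Real.sin (((k-1 : ℕ) : ℝ) * (π/((T:ℝ)+1)))
    = (4 * Real.sin (π/(2*((T:ℝ)+1)))^2) * Real.sin ((k:ℝ) * (π/((T:ℝ)+1))) := by
  set θ := π/((T:ℝ)+1) with hθ
  have hc1 : ((k-1:ℕ):ℝ) = (k:ℝ) - 1 := by
    rw [Nat.cast_sub hk1]; norm_num
  have hc2 : ((k+1:ℕ):ℝ) = (k:ℝ) + 1 := by push_cast; ring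
  rw [hc1, hc2]
  have e1 : ((k:ℝ)+1) * θ = (k:ℝ)*θ + θ := by ring
  have e2 : ((k:ℝ)-1) * θ = (k:ℝ)*θ - θ := by ring
  rw [e1, e2, Real.sin_add, Real.sin_sub]
  have e3 : π/(2*((T:ℝ)+1)) = θ/2 := by rw [hθ, div_div]; ring_nf
  rw [e3, Real.sin_sq_eq_half_sub, show 2*(θ/2) = θ by ring]
  ring


/-- Theorem `Esistenza3`. Let `T ≥ 2` and `f : ℤ[1,T] × [0,∞) → [0,∞)`
continuous.  Assume `(∑_{k=1}^T ∫_0^ξ f(k,t) dt)/ξ² → 0` as `ξ → +∞` and that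
`γ k := liminf_{ξ → 0⁺} (∫_0^ξ f(k,t) dt)/ξ² > 0` for every `k ∈ ℤ[1,T]`.  Then for every
`α > (2 / min_k γ k) · sin²(π / (2(T+1)))` the second-order discrete problem `(S_α)` has
at least one positive solution. -/
theorem second_order_discrete_existence
    (T : ℕ) (hT : 2 ≤ T)
    (f : ℕ → ℝ → ℝ)
    (hf_cont : ∀ k ∈ Finset.Icc 1 T, ContinuousOn (f k) (Set.Ici 0))
    (hf_nonneg : ∀ k ∈ Finset.Icc 1 T, ∀ ξ : ℝ, 0 ≤ ξ → 0 ≤ f k ξ)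
    (γ : ℕ → ℝ)
    (hγ : ∀ k ∈ Finset.Icc 1 T,
      γ k = Filter.liminf (fun ξ : ℝ => (∫ t in (0:ℝ)..ξ, f k t) / ξ ^ 2)
        (nhdsWithin 0 (Set.Ioi 0)))
    (hγpos : ∀ k ∈ Finset.Icc 1 T, 0 < γ k)
    (hlim : Filter.Tendsto
      (fun ξ : ℝ => (∑ k ∈ Finset.Icc 1 T, ∫ t in (0:ℝ)..ξ, f k t) / ξ ^ 2)
      Filter.atTop (nhds 0))
    (α : ℝ)
    (hα : (2 / ((Finset.Icc 1 T).inf' (Finset.nonempty_Icc.mpr (by omega)) γ)) *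
      Real.sin (Real.pi / (2 * ((T : ℝ) + 1))) ^ 2 < α) :
    ∃ u : ℕ → ℝ, u 0 = 0 ∧ u (T + 1) = 0 ∧
      (∀ k ∈ Finset.Icc 1 T, 0 < u k) ∧
      (∀ k ∈ Finset.Icc 1 T,
        -(u (k + 1) - 2 * u k + u (k - 1)) = α * f k (u k)) := by
  have hne : (Finset.Icc 1 T).Nonempty := Finset.nonempty_Icc.mpr (by omega)
  set γmin := (Finset.Icc 1 T).inf' (Finset.nonempty_Icc.mpr (by omega : (1:ℕ) ≤ T)) γ
    with hγmin
  have hγmin_pos : 0 < γmin := by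
    rw [hγmin, Finset.lt_inf'_iff]
    exact hγpos
  have hγmin_le : ∀ k ∈ Finset.Icc 1 T, γmin ≤ γ k := fun k hk => Finset.inf'_le _ hk
  set θ : ℝ := π / (2*((T:ℝ)+1)) with hθ
  have hTpos : (0:ℝ) < (T:ℝ) + 1 := by positivity
  have hθpos : 0 < θ := by rw [hθ]; positivity
  have hθlt : θ < π := by
    rw [hθ, div_lt_iff₀ (by positivity)]
    nlinarith [Real.pi_pos]
  have hsθ : 0 < Real.sin θ := Real.sin_pos_of_pos_of_lt_pi hθpos hθlt
  have hα' : (2 / γmin) * Real.sin θ ^ 2 < α := hα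
  have hα0 : 0 < α := lt_of_le_of_lt (by positivity) hα'
  have hαγ : 2 * Real.sin θ ^ 2 < α * γmin := by
    rw [div_mul_eq_mul_div, div_lt_iff₀ hγmin_pos] at hα'
    linarith
  set ε : ℝ := (α * γmin - 2 * Real.sin θ ^ 2) / (2*α) with hε_def
  have hε : 0 < ε := by
    rw [hε_def]
    apply div_pos (by linarith) (by linarith)
  have hkey : 2 * Real.sin θ ^ 2 < α * (γmin - ε) := by
    rw [hε_def]
    have : α * (γmin - (α * γmin - 2 * Real.sin θ ^ 2) / (2*α))
        = (α * γmin + 2 * Real.sin θ ^ 2)/2 := by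
      field_simp
      ring
    rw [this]
    linarith
  -- small-scale lower bound on the potentials
  obtain ⟨δ, hδpos, hδ⟩ : ∃ δ > 0, ∀ ξ : ℝ, 0 < ξ → ξ < δ →
      ∀ k ∈ Finset.Icc 1 T, (γmin - ε) * ξ^2 < ∫ t in (0:ℝ)..ξ, f k t := by
    have hev : ∀ᶠ ξ in nhdsWithin (0:ℝ) (Set.Ioi 0), ∀ k ∈ Finset.Icc 1 T,
        γmin - ε < (∫ t in (0:ℝ)..ξ, f k t) / ξ^2 := by
      rw [eventually_all_finset]
      intro k hk
      apply eventually_lt_of_lt_liminf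
      · rw [← hγ k hk]
        have := hγmin_le k hk
        linarith
      · apply Filter.isBoundedUnder_of_eventually_ge (a := (0:ℝ))
        apply Filter.eventually_of_mem self_mem_nhdsWithin
        intro ξ hξ
        have hξ0 : (0:ℝ) < ξ := hξ
        apply div_nonneg _ (by positivity)
        apply intervalIntegral.integral_nonneg (le_of_lt hξ0)
        intro t ht
        exact hf_nonneg k hk t ht.1
    rw [eventually_nhdsWithin_iff, Metric.eventually_nhds_iff] at hev
    obtain ⟨δ, hδpos, hδ⟩ := hev
    refine ⟨δ, hδpos, fun ξ hξ0 hξδ k hk => ?_⟩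
    have h1 := hδ (y := ξ) (by rw [Real.dist_eq, sub_zero, abs_of_pos hξ0]; exact hξδ) hξ0
    have h2 := h1 k hk
    rw [lt_div_iff₀ (by positivity)] at h2
    linarith
  -- minimizer of Phi
  have hcont : Continuous (Phi T f α) := Phi_continuous hf_cont
  have hcoerc := Phi_coercive hf_cont hf_nonneg hα0 hlim
  obtain ⟨v, hv⟩ := hcont.exists_forall_le hcoerc
  -- the eigenvector
  set φ : ℕ → ℝ := fun k => Real.sin ((k:ℝ) * (π/((T:ℝ)+1))) with hφ
  have hφ0 : φ 0 = 0 := by simp [hφ]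
  have hφT1 : φ (T+1) = 0 := by
    have h1 : ((T+1:ℕ):ℝ) * (π/((T:ℝ)+1)) = π := by
      push_cast
      field_simp
    simp only [hφ]
    rw [h1, Real.sin_pi]
  have hφpos : ∀ k, 1 ≤ k → k ≤ T → 0 < φ k := by
    intro k h1 h2
    have hk0 : (0:ℝ) < (k:ℝ) := by exact_mod_cast h1
    apply Real.sin_pos_of_pos_of_lt_pi
    · positivity
    · have hklt : (k:ℝ) < (T:ℝ)+1 := by
        have : (k:ℕ) < T+1 := by omega
        exact_mod_cast this
      calc (k:ℝ) * (π/((T:ℝ)+1)) < ((T:ℝ)+1) * (π/((T:ℝ)+1)) := by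
            apply mul_lt_mul_of_pos_right hklt (by positivity)
        _ = π := by field_simp
  have hφle1 : ∀ k, φ k ≤ 1 := fun k => Real.sin_le_one _
  -- test vector
  set s : ℝ := δ/2 with hs
  have hspos : 0 < s := by rw [hs]; linarith
  set w : Fin T → ℝ := fun i => s * φ ((i:ℕ)+1) with hw
  have hUw : ∀ k, k ≤ T+1 → Uext T w k = s * φ k := by
    intro k hk
    by_cases h : 1 ≤ k ∧ k ≤ T
    · rw [Uext_mem w h.1 h.2]
      show s * φ ((⟨k-1, by omega⟩ : Fin T) + 1) = s * φ k
      congr 2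
      simp
      omega
    · have : k = 0 ∨ k = T+1 := by omega
      rcases this with h' | h'
      · simp [Uext, h', hφ0]
      · rw [h']
        rw [Uext_top w, hφT1, mul_zero]
  -- energy of the test vector
  have hQw : ∑ k ∈ Finset.range (T+1), (Uext T w (k+1) - Uext T w k)^2
      = ∑ k ∈ Finset.Icc 1 T, (s * φ k) * (2*(s * φ k) - s * φ (k+1) - s * φ (k-1)) := by
    have h1 : ∀ k ∈ Finset.range (T+1),
        (Uext T w (k+1) - Uext T w k)^2 = ((fun k => s * φ k) (k+1) - (fun k => s * φ k) k)^2 := by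
      intro k hk
      simp only [Finset.mem_range] at hk
      rw [hUw (k+1) (by omega), hUw k (by omega)]
    rw [Finset.sum_congr rfl h1]
    exact sbp T (fun k => s * φ k) (by simp [hφ0]) (by simp [hφT1])
  have hQw2 : ∑ k ∈ Finset.range (T+1), (Uext T w (k+1) - Uext T w k)^2
      = (4 * Real.sin θ ^2) * s^2 * ∑ k ∈ Finset.Icc 1 T, (φ k)^2 := by
    rw [hQw, Finset.mul_sum]
    apply Finset.sum_congr rfl
    intro k hk
    simp only [Finset.mem_Icc] at hk
    have heig := eigen_identity T hk.1
    have h2 : 2*(s * φ k) - s * φ (k+1) - s * φ (k-1)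
        = s * (2 * φ k - φ (k+1) - φ (k-1)) := by ring
    rw [h2]
    have h3 : 2 * φ k - φ (k+1) - φ (k-1) = (4 * Real.sin θ ^2) * φ k := by
      simp only [hφ, hθ]
      exact heig
    rw [h3]
    ring
  -- Phi of the test vector is negative
  have hPhiw : Phi T f α w < 0 := by
    have hsum_pos : 0 < ∑ k ∈ Finset.Icc 1 T, (φ k)^2 := by
      apply Finset.sum_pos _ hne
      intro k hk
      simp only [Finset.mem_Icc] at hk
      exact pow_pos (hφpos k hk.1 hk.2) 2
    have hPw : ∑ k ∈ Finset.Icc 1 T, (γmin - ε) * (s * φ k)^2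
        < ∑ k ∈ Finset.Icc 1 T, Fint f k (Uext T w k) := by
      apply Finset.sum_lt_sum_of_nonempty hne
      intro k hk
      simp only [Finset.mem_Icc] at hk
      have hφk := hφpos k hk.1 hk.2
      have hξpos : 0 < s * φ k := mul_pos hspos hφk
      have hξδ : s * φ k < δ := by
        calc s * φ k ≤ s * 1 := by
              apply mul_le_mul_of_nonneg_left (hφle1 k) (le_of_lt hspos)
          _ = δ/2 := by rw [hs, mul_one]
          _ < δ := by linarith
      rw [hUw k (by omega), Fint_eq_integral (hf_nonneg k (by simp; omega)) (le_of_lt hξpos)]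
      exact hδ (s * φ k) hξpos hξδ k (by simp; omega)
    have hPw' : ∑ k ∈ Finset.Icc 1 T, (γmin - ε) * (s * φ k)^2
        = (γmin - ε) * s^2 * ∑ k ∈ Finset.Icc 1 T, (φ k)^2 := by
      rw [Finset.mul_sum]
      apply Finset.sum_congr rfl
      intro k _
      ring
    have h5 : Phi T f α w = (4 * Real.sin θ^2) * s^2 * (∑ k ∈ Finset.Icc 1 T, (φ k)^2) / 2
        - α * ∑ k ∈ Finset.Icc 1 T, Fint f k (Uext T w k) := by
      rw [Phi, hQw2]
    rw [h5]
    have h6 : α * ((γmin - ε) * s^2 * ∑ k ∈ Finset.Icc 1 T, (φ k)^2)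
        < α * ∑ k ∈ Finset.Icc 1 T, Fint f k (Uext T w k) := by
      apply mul_lt_mul_of_pos_left _ hα0
      rw [← hPw']
      exact hPw
    have h7 : (4 * Real.sin θ^2) * s^2 * (∑ k ∈ Finset.Icc 1 T, (φ k)^2) / 2
        < α * ((γmin - ε) * s^2 * ∑ k ∈ Finset.Icc 1 T, (φ k)^2) := by
      have hs2 : 0 < s^2 := by positivity
      have := mul_pos hs2 hsum_pos
      nlinarith [hkey]
    linarith
  have hvneg : Phi T f α v < 0 := lt_of_le_of_lt (hv w) hPhiw
  -- the solution
  set u : ℕ → ℝ := Uext T v with hudef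
  have hEL : ∀ k ∈ Finset.Icc 1 T, 2 * u k - u (k+1) - u (k-1)
      = α * f k (max (u k) 0) := by
    intro k hk
    simp only [Finset.mem_Icc] at hk
    have hj : k - 1 < T := by omega
    have h := Phi_EL hf_cont v hv ⟨k-1, hj⟩
    have e : ((⟨k-1, hj⟩ : Fin T) : ℕ) + 1 = k := by simp; omega
    rw [e] at h
    exact h
  have hconc : ∀ k ∈ Finset.Icc 1 T, u (k+1) + u (k-1) ≤ 2 * u k := by
    intro k hk
    have h := hEL k hk
    have hf0 : 0 ≤ f k (max (u k) 0) := hf_nonneg k hk _ (le_max_right _ _)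
    nlinarith [mul_nonneg (le_of_lt hα0) hf0]
  have hnn : ∀ k, k ≤ T+1 → 0 ≤ u k :=
    concave_nonneg T u (Uext_zero v) (Uext_top v) hconc
  have hnotall : ¬ (∀ k ∈ Finset.Icc 1 T, u k = 0) := by
    intro hall
    have hv0 : v = 0 := by
      funext j
      have hj1 : (j:ℕ)+1 ∈ Finset.Icc 1 T := by simp
      have := hall ((j:ℕ)+1) hj1
      rw [hudef, Uext_mem v (by omega) (by omega : (j:ℕ)+1 ≤ T)] at this
      simpa using this
    rw [hv0, Phi_zero] at hvneg
    exact lt_irrefl 0 hvneg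
  have hpos : ∀ k ∈ Finset.Icc 1 T, 0 < u k := by
    intro k hk
    simp only [Finset.mem_Icc] at hk
    rcases lt_or_eq_of_le (hnn k (by omega)) with h | h
    · exact h
    · exfalso
      apply hnotall
      exact zero_propagates T u (Uext_zero v) hnn hconc k (by simp; omega) h.symm
  refine ⟨u, Uext_zero v, Uext_top v, hpos, ?_⟩
  intro k hk
  have h := hEL k hk
  have hmax : max (u k) 0 = u k := max_eq_left (hnn k (by simp at hk; omega))
  rw [hmax] at h
  linarith


end Main
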